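/- Let ε_0 = 1/2 and ε_k = 1 for k ≥ 1. For all n ∈ ℕ and 0 ≤ x, y ≤ π with cos x ≠ cos y, ∑_{k=0}^{n} ε_k cos(ky) sin((n-k+1/2)x) = sin(x/2)·(cos(x/2)cos((n+1/2)x) - cos(y/2)cos((n+1/2)y))/(cos x - cos y). -/

import Mathlib

open Real Finset

private lemma key_aux (x y : ℝ) : ∀ n : ℕ,
    ((∑ k ∈ Finset.range (n + 1),
        (if k = 0 then (1 / 2 : ℝ) else 1) * Real.cos ((k : ℝ) * y) *
          Real.sin (((n : ℝ) - (k : ℝ) + 1 / 2) * x)) * (Real.cos x - Real.cos y) =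
      Real.sin (x / 2) *
        (Real.cos (x / 2) * Real.cos (((n : ℝ) + 1 / 2) * x) -
          Real.cos (y / 2) * Real.cos (((n : ℝ) + 1 / 2) * y)))
    ∧ ((∑ k ∈ Finset.range (n + 1),
        (if k = 0 then (1 / 2 : ℝ) else 1) * Real.cos ((k : ℝ) * y) *
          Real.cos (((n : ℝ) - (k : ℝ) + 1 / 2) * x)) * (Real.cos x - Real.cos y) =
      Real.cos (x / 2) *
        (Real.sin (y / 2) * Real.sin (((n : ℝ) + 1 / 2) * y) -
          Real.sin (x / 2) * Real.sin (((n : ℝ) + 1 / 2) * x))) := by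
  have hcx : Real.cos x = Real.cos (x / 2) ^ 2 - Real.sin (x / 2) ^ 2 := by
    have h := Real.cos_add (x / 2) (x / 2)
    rw [show x / 2 + x / 2 = x by ring] at h; rw [h]; ring
  have hsx : Real.sin x = 2 * Real.sin (x / 2) * Real.cos (x / 2) := by
    have h := Real.sin_add (x / 2) (x / 2)
    rw [show x / 2 + x / 2 = x by ring] at h; rw [h]; ring
  have hcy : Real.cos y = Real.cos (y / 2) ^ 2 - Real.sin (y / 2) ^ 2 := by
    have h := Real.cos_add (y / 2) (y / 2)
    rw [show y / 2 + y / 2 = y by ring] at h; rw [h]; ring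
  have hsy : Real.sin y = 2 * Real.sin (y / 2) * Real.cos (y / 2) := by
    have h := Real.sin_add (y / 2) (y / 2)
    rw [show y / 2 + y / 2 = y by ring] at h; rw [h]; ring
  intro n
  induction n with
  | zero =>
    norm_num [Finset.sum_range_one]
    constructor
    · rw [show (1 : ℝ) / 2 * x = x / 2 by ring, show (1 : ℝ) / 2 * y = y / 2 by ring, hcx, hcy]
      linear_combination (-(Real.sin (x / 2)) / 2) * Real.sin_sq_add_cos_sq (x / 2) +
        (Real.sin (x / 2) / 2) * Real.sin_sq_add_cos_sq (y / 2)
    · rw [show (1 : ℝ) / 2 * x = x / 2 by ring, show (1 : ℝ) / 2 * y = y / 2 by ring, hcx, hcy]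
      linear_combination (Real.cos (x / 2) / 2) * Real.sin_sq_add_cos_sq (x / 2) -
        (Real.cos (x / 2) / 2) * Real.sin_sq_add_cos_sq (y / 2)
  | succ n ih =>
    obtain ⟨h1, h2⟩ := ih
    have split1 : ∑ k ∈ Finset.range (n + 1),
        (if k = 0 then (1 / 2 : ℝ) else 1) * Real.cos ((k : ℝ) * y) *
          Real.sin ((((n : ℕ) + 1 : ℕ) - (k : ℝ) + 1 / 2) * x) =
        Real.cos x * (∑ k ∈ Finset.range (n + 1),
          (if k = 0 then (1 / 2 : ℝ) else 1) * Real.cos ((k : ℝ) * y) *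
            Real.sin (((n : ℝ) - (k : ℝ) + 1 / 2) * x)) +
        Real.sin x * (∑ k ∈ Finset.range (n + 1),
          (if k = 0 then (1 / 2 : ℝ) else 1) * Real.cos ((k : ℝ) * y) *
            Real.cos (((n : ℝ) - (k : ℝ) + 1 / 2) * x)) := by
      rw [Finset.mul_sum, Finset.mul_sum, ← Finset.sum_add_distrib]
      refine Finset.sum_congr rfl fun k _ => ?_
      push_cast
      rw [show ((n : ℝ) + 1 - (k : ℝ) + 1 / 2) * x = ((n : ℝ) - (k : ℝ) + 1 / 2) * x + x by ring,
        Real.sin_add]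
      ring
    have split2 : ∑ k ∈ Finset.range (n + 1),
        (if k = 0 then (1 / 2 : ℝ) else 1) * Real.cos ((k : ℝ) * y) *
          Real.cos ((((n : ℕ) + 1 : ℕ) - (k : ℝ) + 1 / 2) * x) =
        Real.cos x * (∑ k ∈ Finset.range (n + 1),
          (if k = 0 then (1 / 2 : ℝ) else 1) * Real.cos ((k : ℝ) * y) *
            Real.cos (((n : ℝ) - (k : ℝ) + 1 / 2) * x)) -
        Real.sin x * (∑ k ∈ Finset.range (n + 1),
          (if k = 0 then (1 / 2 : ℝ) else 1) * Real.cos ((k : ℝ) * y) *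
            Real.sin (((n : ℝ) - (k : ℝ) + 1 / 2) * x)) := by
      rw [Finset.mul_sum, Finset.mul_sum, ← Finset.sum_sub_distrib]
      refine Finset.sum_congr rfl fun k _ => ?_
      push_cast
      rw [show ((n : ℝ) + 1 - (k : ℝ) + 1 / 2) * x = ((n : ℝ) - (k : ℝ) + 1 / 2) * x + x by ring,
        Real.cos_add]
      ring
    have elast : (((n : ℕ) + 1 : ℕ) : ℝ) - (((n : ℕ) + 1 : ℕ) : ℝ) + 1 / 2 = 1 / 2 := by
      push_cast; ring
    have ecy : ((((n : ℕ) + 1 : ℕ) : ℝ)) * y = ((n : ℝ) + 1 / 2) * y + y / 2 := by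
      push_cast; ring
    have ecx1 : ((((n : ℕ) + 1 : ℕ) : ℝ) + 1 / 2) * x = ((n : ℝ) + 1 / 2) * x + x := by
      push_cast; ring
    have ecy1 : ((((n : ℕ) + 1 : ℕ) : ℝ) + 1 / 2) * y = ((n : ℝ) + 1 / 2) * y + y := by
      push_cast; ring
    constructor
    · rw [Finset.sum_range_succ, split1, elast, ecy, ecx1, ecy1, Real.cos_add, Real.cos_add,
        Real.cos_add, show (1 : ℝ) / 2 * x = x / 2 by ring]
      simp only [hcx, hcy, hsx, hsy, Nat.succ_ne_zero, if_false] at h1 h2 ⊢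
      linear_combination (Real.cos (x / 2) ^ 2 - Real.sin (x / 2) ^ 2) * h1 +
        (2 * Real.sin (x / 2) * Real.cos (x / 2)) * h2 +
        (Real.sin (x / 2) * Real.sin (y / 2) * Real.sin (((n : ℝ) + 1 / 2) * y)) *
          Real.sin_sq_add_cos_sq (x / 2) -
        (Real.sin (x / 2) * Real.sin (y / 2) * Real.sin (((n : ℝ) + 1 / 2) * y)) *
          Real.sin_sq_add_cos_sq (y / 2)
    · rw [Finset.sum_range_succ, split2, elast, ecy, ecx1, ecy1, Real.sin_add, Real.sin_add,
        Real.cos_add, show (1 : ℝ) / 2 * x = x / 2 by ring]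
      simp only [hcx, hcy, hsx, hsy, Nat.succ_ne_zero, if_false] at h1 h2 ⊢
      linear_combination (Real.cos (x / 2) ^ 2 - Real.sin (x / 2) ^ 2) * h2 -
        (2 * Real.sin (x / 2) * Real.cos (x / 2)) * h1 +
        (Real.cos (x / 2) * Real.cos (y / 2) * Real.cos (((n : ℝ) + 1 / 2) * y)) *
          Real.sin_sq_add_cos_sq (x / 2) -
        (Real.cos (x / 2) * Real.cos (y / 2) * Real.cos (((n : ℝ) + 1 / 2) * y)) *
          Real.sin_sq_add_cos_sq (y / 2)

/-- With `ε₀ = 1/2` and `ε_k = 1` for `k ≥ 1`: for all `n ∈ ℕ` and `0 ≤ x, y ≤ π` with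
`cos x ≠ cos y`,
`∑_{k=0}^{n} ε_k cos (ky) sin ((n-k+1/2)x)
  = sin (x/2) (cos (x/2) cos ((n+1/2)x) - cos (y/2) cos ((n+1/2)y)) / (cos x - cos y)`. -/
theorem sum_eps_cos_sin (n : ℕ) (x y : ℝ) (hx0 : 0 ≤ x) (hxπ : x ≤ π) (hy0 : 0 ≤ y)
    (hyπ : y ≤ π) (h : Real.cos x ≠ Real.cos y) :
    ∑ k ∈ Finset.range (n + 1),
        (if k = 0 then (1 / 2 : ℝ) else 1) * Real.cos ((k : ℝ) * y) *
          Real.sin (((n : ℝ) - (k : ℝ) + 1 / 2) * x) =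
      Real.sin (x / 2) *
        (Real.cos (x / 2) * Real.cos (((n : ℝ) + 1 / 2) * x) -
          Real.cos (y / 2) * Real.cos (((n : ℝ) + 1 / 2) * y)) /
        (Real.cos x - Real.cos y) := by
  have hd : Real.cos x - Real.cos y ≠ 0 := sub_ne_zero.mpr h
  rw [eq_div_iff hd]
  exact (key_aux x y n).1
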